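/- Fix a fully supported diffuse Borel probability measure ν on [0,1], and for each fully supported diffuse Borel probability measure μ let σ(μ) = f_μ^{-1} ∘ f_ν where f_μ(t)=μ[0,t). Then σ is 1-Lipschitz: for any two such measures μ_1, μ_2, sup_{t∈[0,1]} |σ(μ_1)(t) − σ(μ_2)(t)| ≤ δ(μ_1,μ_2), where δ is the optimal matching distance. -/

import Mathlib

open MeasureTheory
open scoped unitInterval

/-- The optimal matching distance between two Borel measures. -/
noncomputable def matchDist {X : Type*} [PseudoMetricSpace X] [MeasurableSpace X]
    (μ ν : Measure X) : ℝ :=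
  sInf {r : ℝ | ∀ U : Set X, MeasurableSet U →
    μ U ≤ ν (Metric.thickening r U) ∧ ν U ≤ μ (Metric.thickening r U)}

/-- The distribution function of a measure on `[0,1]`. -/
noncomputable def distFun (μ : Measure I) (t : I) : ℝ := (μ (Set.Iio t)).toReal

/-- The increasing rearrangement map `σ(μ) = f_μ⁻¹ ∘ f_ν`. -/
noncomputable def rearr (μ ν : Measure I) (t : I) : I :=
  Function.invFun (distFun μ) (distFun ν t)

lemma strictMono_aux (μ : Measure I) [IsFiniteMeasure μ]
    (hfull : ∀ U : Set I, IsOpen U → U.Nonempty → 0 < μ U)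
    {z w : I} (hzw : z < w) : μ (Set.Iio z) < μ (Set.Iio w) := by
  obtain ⟨m, hzm, hmw⟩ := exists_between hzw
  obtain ⟨m', hzm', hm'm⟩ := exists_between hzm
  have hpos : 0 < μ (Set.Ioo z m) :=
    hfull _ isOpen_Ioo ⟨m', hzm', hm'm⟩
  have hsub : Set.Iio z ∪ Set.Ioo z m ⊆ Set.Iio w := by
    rintro p (hp | hp)
    · exact lt_trans hp (lt_trans hzm hmw)
    · exact lt_trans hp.2 hmw
  have hdisj : Disjoint (Set.Iio z) (Set.Ioo z m) := by
    rw [Set.disjoint_left]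
    rintro p hp hp'
    exact absurd hp'.1 (not_lt.2 hp.le)
  calc μ (Set.Iio z) < μ (Set.Iio z) + μ (Set.Ioo z m) :=
        ENNReal.lt_add_right (measure_ne_top _ _) hpos.ne'
    _ = μ (Set.Iio z ∪ Set.Ioo z m) :=
        (measure_union hdisj measurableSet_Ioo).symm
    _ ≤ μ (Set.Iio w) := measure_mono hsub

lemma distFun_surj (μ : Measure I) [IsProbabilityMeasure μ]
    (hdiff : ∀ x : I, μ {x} = 0) {s : ℝ} (h0 : 0 ≤ s) (h1 : s ≤ 1) :
    ∃ x : I, distFun μ x = s := by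
  set A : Set ℝ := {y : ℝ | ∃ hy : y ∈ Set.Icc (0:ℝ) 1,
      (μ (Set.Iio (⟨y, hy⟩ : I))).toReal ≤ s} with hA
  have hIio0 : ∀ (h : (0:ℝ) ∈ Set.Icc (0:ℝ) 1), Set.Iio (⟨0, h⟩ : I) = ∅ := by
    intro h
    rw [Set.eq_empty_iff_forall_notMem]
    intro p hp
    exact absurd p.2.1 (not_le.2 hp)
  have hA0 : (0:ℝ) ∈ A := by
    refine ⟨(show (0:ℝ) ∈ Set.Icc (0:ℝ) 1 from ⟨le_refl 0, zero_le_one⟩), ?_⟩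
    rw [hIio0]; simp [h0]
  have hAne : A.Nonempty := ⟨0, hA0⟩
  have hAbd : BddAbove A := ⟨1, by rintro y ⟨hy, -⟩; exact hy.2⟩
  set c : ℝ := sSup A with hcdef
  have hc0 : 0 ≤ c := le_csSup hAbd hA0
  have hc1 : c ≤ 1 := csSup_le hAne (by rintro y ⟨hy, -⟩; exact hy.2)
  set x : I := ⟨c, hc0, hc1⟩ with hxdef
  -- upper bound
  have hub : μ (Set.Iio x) ≤ ENNReal.ofReal s := by
    rcases eq_or_lt_of_le hc0 with hc | hc
    · have : Set.Iio x = ∅ := by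
        rw [Set.eq_empty_iff_forall_notMem]
        intro p hp
        have : (p : ℝ) < c := hp
        have := p.2.1
        linarith [hc]
      rw [this]; simp
    · set z : ℕ → I := fun n => ⟨c - c / (n + 1), by
        constructor
        · have : c / (n + 1 : ℝ) ≤ c := by
            apply div_le_self hc0
            have : (0:ℝ) ≤ n := Nat.cast_nonneg n
            linarith
          linarith
        · have : (0:ℝ) ≤ c / (n+1) := by positivity
          linarith⟩ with hzdef
      have key1 : ∀ n, μ (Set.Iio (z n)) ≤ ENNReal.ofReal s := by
        intro n
        have hzlt : (z n : ℝ) < c := by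
          have : (0:ℝ) < c / (n+1) := by positivity
          simp only [hzdef]
          linarith
        obtain ⟨y, hyA, hzy⟩ := exists_lt_of_lt_csSup hAne hzlt
        obtain ⟨hy, hys⟩ := hyA
        have hle : z n ≤ (⟨y, hy⟩ : I) := le_of_lt hzy
        calc μ (Set.Iio (z n)) ≤ μ (Set.Iio (⟨y, hy⟩ : I)) :=
              measure_mono (Set.Iio_subset_Iio hle)
          _ ≤ ENNReal.ofReal s :=
              (ENNReal.le_ofReal_iff_toReal_le (measure_ne_top _ _) h0).2 hys
      have hmono : Monotone z := by
        intro a b hab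
        have : c / (b + 1 : ℝ) ≤ c / (a + 1 : ℝ) := by
          apply div_le_div_of_nonneg_left hc0 (by positivity)
          exact_mod_cast by omega
        show (z a : ℝ) ≤ z b
        simp only [hzdef]
        linarith
      have hcover : Set.Iio x ⊆ ⋃ n, Set.Iio (z n) := by
        intro p hp
        have hpc : (p : ℝ) < c := hp
        obtain ⟨n, hn⟩ := exists_nat_gt (c / (c - p))
        refine Set.mem_iUnion.2 ⟨n, ?_⟩
        show (p : ℝ) < c - c / (n + 1)
        have hcp : (0:ℝ) < c - p := by linarith
        have h1' : c < (n : ℝ) * (c - p) := by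
          have := (div_lt_iff₀ hcp).1 hn
          linarith
        have h2' : c / (n + 1 : ℝ) < c - p := by
          rw [div_lt_iff₀ (by positivity)]
          nlinarith
        linarith
      calc μ (Set.Iio x) ≤ μ (⋃ n, Set.Iio (z n)) := measure_mono hcover
        _ = ⨆ n, μ (Set.Iio (z n)) :=
            Directed.measure_iUnion
              (Monotone.directed_le fun a b hab => Set.Iio_subset_Iio (hmono hab))
        _ ≤ ENNReal.ofReal s := iSup_le key1
  -- lower bound
  have hlbIic : ENNReal.ofReal s ≤ μ (Set.Iic x) := by
    rcases eq_or_lt_of_le hc1 with hc | hc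
    · have : Set.Iic x = Set.univ := by
        rw [Set.eq_univ_iff_forall]
        intro p
        show (p : ℝ) ≤ c
        rw [hc]; exact p.2.2
      rw [this, measure_univ]
      calc ENNReal.ofReal s ≤ ENNReal.ofReal 1 := ENNReal.ofReal_le_ofReal h1
        _ = 1 := ENNReal.ofReal_one
    · set y : ℕ → I := fun n => ⟨c + (1 - c) / (n + 1), by
        constructor
        · have : (0:ℝ) ≤ (1 - c) / (n+1) := by
            apply div_nonneg (by linarith) (by positivity)
          linarith
        · have : (1 - c) / (n + 1 : ℝ) ≤ 1 - c := by
            apply div_le_self (by linarith)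
            have : (0:ℝ) ≤ n := Nat.cast_nonneg n
            linarith
          linarith⟩ with hydef
      have key2 : ∀ n, ENNReal.ofReal s ≤ μ (Set.Iio (y n)) := by
        intro n
        have hyx : ¬ ((μ (Set.Iio (y n))).toReal ≤ s) := by
          intro hcon
          have hyA : ((y n : I) : ℝ) ∈ A := ⟨(y n).2, hcon⟩
          have : ((y n : I) : ℝ) ≤ c := le_csSup hAbd hyA
          have hpos : (0:ℝ) < (1 - c) / (n+1) :=
            div_pos (by linarith) (by positivity)
          simp only [hydef] at this
          linarith
        push_neg at hyx
        rw [ENNReal.ofReal_le_iff_le_toReal (measure_ne_top _ _)]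
        exact hyx.le
      have hinter : Set.Iic x = ⋂ n, Set.Iio (y n) := by
        apply Set.eq_of_subset_of_subset
        · intro p hp
          refine Set.mem_iInter.2 fun n => ?_
          show (p : ℝ) < c + (1 - c) / (n + 1)
          have : (p : ℝ) ≤ c := hp
          have hpos : (0:ℝ) < (1 - c) / (n+1) :=
            div_pos (by linarith) (by positivity)
          linarith
        · intro p hp
          show (p : ℝ) ≤ c
          by_contra hpc
          push_neg at hpc
          obtain ⟨n, hn⟩ := exists_nat_gt ((1 - c) / (p - c))
          have hmem := Set.mem_iInter.1 hp n
          have : (p : ℝ) < c + (1 - c) / (n + 1) := hmem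
          have hpc' : (0:ℝ) < p - c := by linarith
          have h1' : (1 - c) < (n : ℝ) * (p - c) := by
            have := (div_lt_iff₀ hpc').1 hn
            linarith
          have h2' : (1 - c) / (n + 1 : ℝ) < p - c := by
            rw [div_lt_iff₀ (by positivity)]
            nlinarith
          linarith
      have hanti : Antitone fun n => Set.Iio (y n) := by
        intro a b hab
        apply Set.Iio_subset_Iio
        show (y b : ℝ) ≤ y a
        have : (1 - c) / (b + 1 : ℝ) ≤ (1 - c) / (a + 1 : ℝ) := by
          apply div_le_div_of_nonneg_left (by linarith) (by positivity)
          exact_mod_cast by omega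
        simp only [hydef]
        linarith
      rw [hinter, Directed.measure_iInter
        (fun n => (measurableSet_Iio).nullMeasurableSet)
        (hanti.directed_ge) ⟨0, measure_ne_top _ _⟩]
      exact le_iInf key2
  have hlb : ENNReal.ofReal s ≤ μ (Set.Iio x) := by
    have : μ (Set.Iic x) ≤ μ (Set.Iio x) := by
      have : Set.Iic x ⊆ Set.Iio x ∪ {x} := by
        intro p hp
        rcases lt_or_eq_of_le (Set.mem_Iic.1 hp) with h | h
        · exact Or.inl h
        · exact Or.inr h
      calc μ (Set.Iic x) ≤ μ (Set.Iio x ∪ {x}) := measure_mono this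
        _ ≤ μ (Set.Iio x) + μ {x} := measure_union_le _ _
        _ = μ (Set.Iio x) := by rw [hdiff x, add_zero]
    exact le_trans hlbIic this
  refine ⟨x, ?_⟩
  have : μ (Set.Iio x) = ENNReal.ofReal s := le_antisymm hub hlb
  rw [distFun, this, ENNReal.toReal_ofReal h0]

lemma distFun_rearr (μ ν : Measure I) [IsProbabilityMeasure μ] [IsProbabilityMeasure ν]
    (hdiff : ∀ x : I, μ {x} = 0) (t : I) :
    distFun μ (rearr μ ν t) = distFun ν t := by
  apply Function.invFun_eq
  apply distFun_surj μ hdiff ENNReal.toReal_nonneg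
  calc (ν (Set.Iio t)).toReal ≤ (ν Set.univ).toReal :=
        ENNReal.toReal_mono (measure_ne_top _ _) (measure_mono (Set.subset_univ _))
    _ = 1 := by rw [measure_univ, ENNReal.toReal_one]

lemma key_aux (μ₁ μ₂ : Measure I) [IsProbabilityMeasure μ₁] [IsProbabilityMeasure μ₂]
    (hfull₂ : ∀ U : Set I, IsOpen U → U.Nonempty → 0 < μ₂ U) (r : ℝ)
    (hr : ∀ U : Set I, MeasurableSet U → μ₁ U ≤ μ₂ (Metric.thickening r U))
    (x₁ x₂ : I) (hx : μ₁ (Set.Iio x₁) = μ₂ (Set.Iio x₂)) : (x₂ : ℝ) - x₁ ≤ r := by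
  have rpos : 0 < r := by
    by_contra hcon
    push_neg at hcon
    have := hr Set.univ MeasurableSet.univ
    rw [Metric.thickening_of_nonpos hcon, measure_empty, measure_univ] at this
    exact absurd this (by simp)
  by_contra hcon
  push_neg at hcon
  have hlt : (x₁ : ℝ) + r < x₂ := by linarith
  have hx10 := x₁.2.1
  have hx21 := x₂.2.2
  set z : I := ⟨((x₁ : ℝ) + r + x₂) / 2, by constructor <;> nlinarith⟩ with hzdef
  have hzx₂ : z < x₂ := by
    show ((x₁ : ℝ) + r + x₂) / 2 < x₂
    linarith
  have hsub : Metric.thickening r (Set.Iio x₁) ⊆ Set.Iio z := by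
    intro p hp
    rw [Metric.mem_thickening_iff] at hp
    obtain ⟨u, hu, hd⟩ := hp
    have hu' : (u : ℝ) < x₁ := hu
    rw [Subtype.dist_eq, Real.dist_eq] at hd
    have : (p : ℝ) - u ≤ |(p : ℝ) - u| := le_abs_self _
    show (p : ℝ) < ((x₁ : ℝ) + r + x₂) / 2
    linarith
  have h1 : μ₁ (Set.Iio x₁) ≤ μ₂ (Set.Iio z) :=
    le_trans (hr _ measurableSet_Iio) (measure_mono hsub)
  have h2 : μ₂ (Set.Iio z) < μ₂ (Set.Iio x₂) := strictMono_aux μ₂ hfull₂ hzx₂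
  rw [hx] at h1
  exact absurd (lt_of_le_of_lt h1 h2) (lt_irrefl _)

/-- The increasing rearrangement `μ ↦ σ(μ) = f_μ⁻¹ ∘ f_ν` is 1-Lipschitz from the
optimal matching distance to the uniform metric: for fully supported diffuse Borel
probability measures `μ₁, μ₂` on `[0,1]`,
`sup_t |σ(μ₁)(t) − σ(μ₂)(t)| ≤ δ(μ₁, μ₂)`. -/
theorem stmt4 (ν μ₁ μ₂ : Measure I)
    [IsProbabilityMeasure ν] [IsProbabilityMeasure μ₁] [IsProbabilityMeasure μ₂]
    (hdiffν : ∀ x : I, ν {x} = 0)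
    (hdiffμ₁ : ∀ x : I, μ₁ {x} = 0) (hdiffμ₂ : ∀ x : I, μ₂ {x} = 0)
    (hfullν : ∀ U : Set I, IsOpen U → U.Nonempty → 0 < ν U)
    (hfullμ₁ : ∀ U : Set I, IsOpen U → U.Nonempty → 0 < μ₁ U)
    (hfullμ₂ : ∀ U : Set I, IsOpen U → U.Nonempty → 0 < μ₂ U) :
    ∀ t : I, |(rearr μ₁ ν t : ℝ) - (rearr μ₂ ν t : ℝ)| ≤ matchDist μ₁ μ₂ := by
  intro t
  have h2mem : (2:ℝ) ∈ {r : ℝ | ∀ U : Set I, MeasurableSet U →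
      μ₁ U ≤ μ₂ (Metric.thickening r U) ∧ μ₂ U ≤ μ₁ (Metric.thickening r U)} := by
    intro U hU
    rcases Set.eq_empty_or_nonempty U with hUe | ⟨u, hu⟩
    · subst hUe
      simp
    · have huniv : Metric.thickening 2 U = Set.univ := by
        rw [Set.eq_univ_iff_forall]
        intro p
        rw [Metric.mem_thickening_iff]
        refine ⟨u, hu, ?_⟩
        rw [Subtype.dist_eq, Real.dist_eq]
        have h1 := p.2.1; have h2 := p.2.2; have h3 := u.2.1; have h4 := u.2.2
        rw [abs_lt]
        constructor <;> linarith
      rw [huniv, measure_univ, measure_univ]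
      exact ⟨prob_le_one, prob_le_one⟩
  apply le_csInf ⟨2, h2mem⟩
  intro r hrmem
  have hE : μ₁ (Set.Iio (rearr μ₁ ν t)) = μ₂ (Set.Iio (rearr μ₂ ν t)) := by
    have h1 := distFun_rearr μ₁ ν hdiffμ₁ t
    have h2 := distFun_rearr μ₂ ν hdiffμ₂ t
    have : distFun μ₁ (rearr μ₁ ν t) = distFun μ₂ (rearr μ₂ ν t) := h1.trans h2.symm
    rw [distFun, distFun] at this
    exact (ENNReal.toReal_eq_toReal_iff' (measure_ne_top _ _) (measure_ne_top _ _)).1 this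
  rw [abs_sub_le_iff]
  constructor
  · exact key_aux μ₂ μ₁ hfullμ₁ r (fun U hU => (hrmem U hU).2) _ _ hE.symm
  · exact key_aux μ₁ μ₂ hfullμ₂ r (fun U hU => (hrmem U hU).1) _ _ hE
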